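/- Pumping a letter preserves intersection witnesses away from the pumped block: let O = O₀…O_{N−1} be a powerword with O_i = O_{i+1} = O_{i+2} for some i, and let O^{(k)} = O₀…O_{i−1} O_i^k O_{i+1}…O_{N−1} (of length N+k−1) for k ≥ 1. If a word w of length N+k−1 intersects O^{(k)} at some position j, then the word drop_m(w) intersects O^{(k−1)} for every m in the pumped block {i,…,i+k+1} with m ≠ j, provided k ≥ 2 and w_m(s) ∉ O_m^{(k)}(s) for all slots s. -/
import Mathlib


/-- Intersection of an `ℕ`-indexed slotted word and powerword of a given length. -/
def NInter {Sl : Type*} {A : Sl → Type*} (len : ℕ)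
    (w : ℕ → ∀ s, A s) (O : ℕ → ∀ s, Set (A s)) : Prop :=
  ∃ j < len, ∃ s, w j s ∈ O j s

/-- `pump O i k` repeats the powerletter `O i` exactly `k` times in place of its
    single occurrence at position `i`. -/
def pump {Sl : Type*} {A : Sl → Type*} (O : ℕ → ∀ s, Set (A s)) (i k : ℕ) :
    ℕ → ∀ s, Set (A s) :=
  fun j => if j < i then O j else if j < i + k then O i else O (j - (k - 1))

/-- `dropN m w` deletes position `m` from `w`. -/
def dropN {α : Type*} (m : ℕ) (w : ℕ → α) : ℕ → α :=
  fun j => if j < m then w j else w (j + 1)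

/-- pumping a letter preserves intersection witnesses away from the
    pumped block. -/
theorem pump_drop_intersects {Sl : Type*} {A : Sl → Type*} {N i k : ℕ}
    (O : ℕ → ∀ s, Set (A s)) (w : ℕ → ∀ s, A s) (j m : ℕ)
    (hiN : i + 2 < N)
    (heq1 : O (i + 1) = O i) (heq2 : O (i + 2) = O i)
    (hk : 2 ≤ k)
    (hj : j < N + k - 1)
    (hwj : ∃ s, w j s ∈ pump O i k j s)
    (hm₁ : i ≤ m) (hm₂ : m ≤ i + k + 1) (hmj : m ≠ j) (hmlen : m < N + k - 1)
    (hnm : ∀ s, w m s ∉ pump O i k m s) :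
    NInter (N + k - 2) (dropN m w) (pump O i (k - 1)) := by
  obtain ⟨s, hs⟩ := hwj
  have key : ∀ j', j' ≤ i + k → pump O i (k - 1) j' = pump O i k j' := by
    intro j' hj'
    unfold pump
    split_ifs with h1 h2 h3 h4 <;> try rfl
    · omega
    · have h : j' - (k - 1 - 1) = i + 1 := by omega
      rw [h, heq1]
    · have ha : j' - (k - 1 - 1) = i + 2 := by omega
      have hb : j' - (k - 1) = i + 1 := by omega
      rw [ha, hb, heq1, heq2]
  by_cases hjm : j < m
  · refine ⟨j, by omega, s, ?_⟩
    have hw : dropN m w j = w j := by simp [dropN, hjm]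
    rw [hw, key j (by omega)]
    exact hs
  · have hji : i < j := by omega
    refine ⟨j - 1, by omega, s, ?_⟩
    have hw : dropN m w (j - 1) = w j := by
      unfold dropN
      rw [if_neg (by omega), show j - 1 + 1 = j by omega]
    rw [hw]
    unfold pump at hs ⊢
    by_cases h1 : j < i + k
    · rw [if_neg (by omega), if_pos (by omega)]
      rw [if_neg (by omega), if_pos h1] at hs
      exact hs
    · rw [if_neg (by omega), if_neg (by omega)]
      rw [if_neg (by omega), if_neg (by omega)] at hs
      have h : j - 1 - (k - 1 - 1) = j - (k - 1) := by omega
      rw [h]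
      exact hs
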